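/- In the Grid-4 patch setting, for every affine function u : ℝ² → ℝ (u(x,y) = ax + by + c) the Kuzmin limiter quantities computed from the nodal values u_P = u(P) satisfy P_A^+ ≤ Q_A^+, P_A^- ≥ Q_A^-, P_B^+ ≤ ((2h − 3ε)/(h − 3ε)) Q_B^+, and P_B^- ≥ ((2h − 3ε)/(h − 3ε)) Q_B^-. Moreover, the latter two inequalities are sharp: for the affine function u(x,y) = 1 − x/h (so that u_A = u_B = 0 and u_G = 1) one has P_B^+ = ((2h − 3ε)/(h − 3ε)) Q_B^+, and for u(x,y) = x/h − 1 one has P_B^- = ((2h − 3ε)/(h − 3ε)) Q_B^-. -/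

import Mathlib

noncomputable section

/-! Grid-4 patch setting: nodes `A=(h,2h)`, `B=(h,h)`, `C=(2h,2h)`, `D=(h,3h)`, `E=(0,3h)`,
`F=(0,2h)`, `G=(0,h)`, `H=(h,0)`, `I=(2h,0)`, `J=(2h,h)`, artificial diffusion coefficients
`d_{AB}=d_{AD}=ε−h/6`, `d_{AC}=d_{AF}=ε−h/3`, `d_{AE}=d_{AG}=−h/6`, `d_{BA}=d_{BH}=ε−h/6`,
`d_{BG}=d_{BJ}=ε−h/3`, `d_{BI}=d_{BC}=−h/6`, fluxes `f_{AP}=d_{AP}(u_P−u_A)`,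
`f_{BP}=d_{BP}(u_P−u_B)`, and the Kuzmin limiter quantities `P^±`, `Q^±` at `A` and `B`. -/

/-- `P_A^+ = f_{AB}^+ + f_{AC}^+ + f_{AD}^+`. -/
def PAp (h ε uA uB uC uD : ℝ) : ℝ :=
  max ((ε - h / 6) * (uB - uA)) 0 + max ((ε - h / 3) * (uC - uA)) 0 +
    max ((ε - h / 6) * (uD - uA)) 0

/-- `P_A^- = f_{AB}^- + f_{AC}^- + f_{AD}^-`. -/
def PAm (h ε uA uB uC uD : ℝ) : ℝ :=
  min ((ε - h / 6) * (uB - uA)) 0 + min ((ε - h / 3) * (uC - uA)) 0 +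
    min ((ε - h / 6) * (uD - uA)) 0

/-- `Q_A^+ = -∑_{P ∈ S_A} f_{AP}^-`. -/
def QAp (h ε uA uB uC uD uE uF uG : ℝ) : ℝ :=
  -(min ((ε - h / 6) * (uB - uA)) 0 + min ((ε - h / 3) * (uC - uA)) 0 +
    min ((ε - h / 6) * (uD - uA)) 0 + min (-(h / 6) * (uE - uA)) 0 +
    min ((ε - h / 3) * (uF - uA)) 0 + min (-(h / 6) * (uG - uA)) 0)

/-- `Q_A^- = -∑_{P ∈ S_A} f_{AP}^+`. -/
def QAm (h ε uA uB uC uD uE uF uG : ℝ) : ℝ :=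
  -(max ((ε - h / 6) * (uB - uA)) 0 + max ((ε - h / 3) * (uC - uA)) 0 +
    max ((ε - h / 6) * (uD - uA)) 0 + max (-(h / 6) * (uE - uA)) 0 +
    max ((ε - h / 3) * (uF - uA)) 0 + max (-(h / 6) * (uG - uA)) 0)

/-- `P_B^+ = f_{BI}^+ + f_{BJ}^+ + f_{BC}^+`. -/
def PBp (h ε uB uC uI uJ : ℝ) : ℝ :=
  max (-(h / 6) * (uI - uB)) 0 + max ((ε - h / 3) * (uJ - uB)) 0 +
    max (-(h / 6) * (uC - uB)) 0

/-- `P_B^- = f_{BI}^- + f_{BJ}^- + f_{BC}^-`. -/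
def PBm (h ε uB uC uI uJ : ℝ) : ℝ :=
  min (-(h / 6) * (uI - uB)) 0 + min ((ε - h / 3) * (uJ - uB)) 0 +
    min (-(h / 6) * (uC - uB)) 0

/-- `Q_B^+ = -∑_{P ∈ S_B} f_{BP}^-`. -/
def QBp (h ε uA uB uC uG uH uI uJ : ℝ) : ℝ :=
  -(min ((ε - h / 6) * (uA - uB)) 0 + min (-(h / 6) * (uC - uB)) 0 +
    min ((ε - h / 3) * (uG - uB)) 0 + min ((ε - h / 6) * (uH - uB)) 0 +
    min (-(h / 6) * (uI - uB)) 0 + min ((ε - h / 3) * (uJ - uB)) 0)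

/-- `Q_B^- = -∑_{P ∈ S_B} f_{BP}^+`. -/
def QBm (h ε uA uB uC uG uH uI uJ : ℝ) : ℝ :=
  -(max ((ε - h / 6) * (uA - uB)) 0 + max (-(h / 6) * (uC - uB)) 0 +
    max ((ε - h / 3) * (uG - uB)) 0 + max ((ε - h / 6) * (uH - uB)) 0 +
    max (-(h / 6) * (uI - uB)) 0 + max ((ε - h / 3) * (uJ - uB)) 0)


set_option maxHeartbeats 4000000 in
lemma flux_cases (c x : ℝ) (hc : c ≤ 0) :
    (c * x ≤ 0 ∧ max (c * x) 0 = 0 ∧ min (c * x) 0 = c * x) ∨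
      (0 ≤ c * x ∧ max (c * x) 0 = c * x ∧ min (c * x) 0 = 0) := by
  rcases le_total 0 x with h | h
  · have : c * x ≤ 0 := by nlinarith
    exact Or.inl ⟨this, max_eq_right this, min_eq_left this⟩
  · have : 0 ≤ c * x := by nlinarith
    exact Or.inr ⟨this, max_eq_left this, min_eq_right this⟩

lemma flux_two (c1 c2 x : ℝ) (h1 : c1 ≤ 0) (h2 : c2 ≤ 0) :
    (c1 * x ≤ 0 ∧ 0 ≤ c2 * (-x) ∧ max (c1 * x) 0 = 0 ∧ min (c1 * x) 0 = c1 * x ∧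
      max (c2 * (-x)) 0 = c2 * (-x) ∧ min (c2 * (-x)) 0 = 0) ∨
    (0 ≤ c1 * x ∧ c2 * (-x) ≤ 0 ∧ max (c1 * x) 0 = c1 * x ∧ min (c1 * x) 0 = 0 ∧
      max (c2 * (-x)) 0 = 0 ∧ min (c2 * (-x)) 0 = c2 * (-x)) := by
  rcases le_total 0 x with h | h
  · have a1 : c1 * x ≤ 0 := by nlinarith
    have a2 : 0 ≤ c2 * (-x) := by nlinarith
    exact Or.inl ⟨a1, a2, max_eq_right a1, min_eq_left a1, max_eq_left a2, min_eq_right a2⟩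
  · have a1 : 0 ≤ c1 * x := by nlinarith
    have a2 : c2 * (-x) ≤ 0 := by nlinarith
    exact Or.inr ⟨a1, a2, max_eq_left a1, min_eq_right a1, max_eq_right a2, min_eq_left a2⟩

lemma keyA (h ε s t uA uB uC uD uE uF uG : ℝ) (hh : 0 < h) (hε : 0 < ε) (hεh : ε < h / 9)
    (eB : uB - uA = -t) (eC : uC - uA = s) (eD : uD - uA = t) (eE : uE - uA = t - s)
    (eF : uF - uA = -s) (eG : uG - uA = -(s + t)) :
    PAp h ε uA uB uC uD ≤ QAp h ε uA uB uC uD uE uF uG := by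
  simp only [PAp, QAp, eB, eC, eD, eE, eF, eG]
  have h1 := max_add_min ((ε - h / 6) * (-t)) (0 : ℝ)
  have h2 := max_add_min ((ε - h / 3) * s) (0 : ℝ)
  have h3 := max_add_min ((ε - h / 6) * t) (0 : ℝ)
  have h4 : min (-(h / 6) * (t - s)) 0 ≤ 0 := min_le_right _ _
  have h5 : min ((ε - h / 3) * (-s)) 0 ≤ (ε - h / 3) * (-s) := min_le_left _ _
  have h6 : min (-(h / 6) * (-(s + t))) 0 ≤ 0 := min_le_right _ _
  have r1 : (ε - h / 6) * (-t) + (ε - h / 6) * t = 0 := by ring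
  have r2 : (ε - h / 3) * (-s) + (ε - h / 3) * s = 0 := by ring
  linarith

lemma keyAm (h ε s t uA uB uC uD uE uF uG : ℝ) (hh : 0 < h) (hε : 0 < ε) (hεh : ε < h / 9)
    (eB : uB - uA = -t) (eC : uC - uA = s) (eD : uD - uA = t) (eE : uE - uA = t - s)
    (eF : uF - uA = -s) (eG : uG - uA = -(s + t)) :
    QAm h ε uA uB uC uD uE uF uG ≤ PAm h ε uA uB uC uD := by
  simp only [PAm, QAm, eB, eC, eD, eE, eF, eG]
  have h1 := max_add_min ((ε - h / 6) * (-t)) (0 : ℝ)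
  have h2 := max_add_min ((ε - h / 3) * s) (0 : ℝ)
  have h3 := max_add_min ((ε - h / 6) * t) (0 : ℝ)
  have h4 : (0 : ℝ) ≤ max (-(h / 6) * (t - s)) 0 := le_max_right _ _
  have h5 : (ε - h / 3) * (-s) ≤ max ((ε - h / 3) * (-s)) 0 := le_max_left _ _
  have h6 : (0 : ℝ) ≤ max (-(h / 6) * (-(s + t))) 0 := le_max_right _ _
  have r1 : (ε - h / 6) * (-t) + (ε - h / 6) * t = 0 := by ring
  have r2 : (ε - h / 3) * (-s) + (ε - h / 3) * s = 0 := by ring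
  linarith

set_option maxHeartbeats 4000000 in
lemma keyB (h ε s t uA uB uC uG uH uI uJ : ℝ) (hh : 0 < h) (hε : 0 < ε) (hεh : ε < h / 9)
    (eA : uA - uB = t) (eC : uC - uB = s + t) (eG : uG - uB = -s) (eH : uH - uB = -t)
    (eI : uI - uB = s - t) (eJ : uJ - uB = s) :
    PBp h ε uB uC uI uJ ≤ (2 * h - 3 * ε) / (h - 3 * ε) * QBp h ε uA uB uC uG uH uI uJ := by
  have hd : (0 : ℝ) < h - 3 * ε := by linarith
  simp only [PBp, QBp, eA, eC, eG, eH, eI, eJ]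
  rw [div_mul_eq_mul_div, le_div_iff₀ hd]
  have h2e : (0 : ℝ) ≤ 2 * h - 3 * ε := by linarith
  obtain ⟨p1, p4, _, m1, _, m4⟩ | ⟨p1, p4, _, m1, _, m4⟩ :=
    flux_two (ε - h / 6) (ε - h / 6) t (by linarith) (by linarith) <;>
  obtain ⟨p6, p3, e6, m6, _, m3⟩ | ⟨p6, p3, e6, m6, _, m3⟩ :=
    flux_two (ε - h / 3) (ε - h / 3) s (by linarith) (by linarith) <;>
  obtain ⟨p2, e2, m2⟩ | ⟨p2, e2, m2⟩ := flux_cases (-(h / 6)) (s + t) (by linarith) <;>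
  obtain ⟨p5, e5, m5⟩ | ⟨p5, e5, m5⟩ := flux_cases (-(h / 6)) (s - t) (by linarith) <;>
  rw [e2, e5, e6, m1, m2, m3, m4, m5, m6] <;>
  nlinarith [p1, p2, p3, p4, p5, p6, hh.le, hε.le, hεh.le, hd.le, h2e]

set_option maxHeartbeats 4000000 in
lemma keyBm (h ε s t uA uB uC uG uH uI uJ : ℝ) (hh : 0 < h) (hε : 0 < ε) (hεh : ε < h / 9)
    (eA : uA - uB = t) (eC : uC - uB = s + t) (eG : uG - uB = -s) (eH : uH - uB = -t)
    (eI : uI - uB = s - t) (eJ : uJ - uB = s) :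
    (2 * h - 3 * ε) / (h - 3 * ε) * QBm h ε uA uB uC uG uH uI uJ ≤ PBm h ε uB uC uI uJ := by
  have hd : (0 : ℝ) < h - 3 * ε := by linarith
  simp only [PBm, QBm, eA, eC, eG, eH, eI, eJ]
  rw [div_mul_eq_mul_div, div_le_iff₀ hd]
  have h2e : (0 : ℝ) ≤ 2 * h - 3 * ε := by linarith
  obtain ⟨p1, p4, e1, m1, e4, m4⟩ | ⟨p1, p4, e1, m1, e4, m4⟩ :=
    flux_two (ε - h / 6) (ε - h / 6) t (by linarith) (by linarith) <;>
  obtain ⟨p6, p3, e6, m6, e3, m3⟩ | ⟨p6, p3, e6, m6, e3, m3⟩ :=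
    flux_two (ε - h / 3) (ε - h / 3) s (by linarith) (by linarith) <;>
  obtain ⟨p2, e2, m2⟩ | ⟨p2, e2, m2⟩ := flux_cases (-(h / 6)) (s + t) (by linarith) <;>
  obtain ⟨p5, e5, m5⟩ | ⟨p5, e5, m5⟩ := flux_cases (-(h / 6)) (s - t) (by linarith) <;>
  rw [e1, e2, e3, e4, e5, e6, m2, m5, m6] <;>
  nlinarith [p1, p2, p3, p4, p5, p6, hh.le, hε.le, hεh.le, hd.le, h2e]

lemma eqBp (h ε : ℝ) (hh : 0 < h) (hε : 0 < ε) (hεh : ε < h / 9) :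
    PBp h ε 0 (-1) (-1) (-1)
      = (2 * h - 3 * ε) / (h - 3 * ε) * QBp h ε 0 0 (-1) 1 0 (-1) (-1) := by
  have hd : (0 : ℝ) < h - 3 * ε := by linarith
  simp only [PBp, QBp]
  rw [max_eq_left (by nlinarith : (0:ℝ) ≤ -(h / 6) * ((-1 : ℝ) - 0)),
    max_eq_left (by nlinarith : (0:ℝ) ≤ (ε - h / 3) * ((-1 : ℝ) - 0)),
    min_eq_right (by nlinarith : (0:ℝ) ≤ -(h / 6) * ((-1 : ℝ) - 0)),
    min_eq_left (by nlinarith : (ε - h / 3) * ((1 : ℝ) - 0) ≤ 0),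
    min_eq_right (by nlinarith : (0:ℝ) ≤ (ε - h / 3) * ((-1 : ℝ) - 0))]
  rw [min_eq_right (by norm_num : (0:ℝ) ≤ (ε - h / 6) * ((0:ℝ) - 0))]
  rw [div_mul_eq_mul_div, eq_div_iff hd.ne']
  ring

lemma eqBm (h ε : ℝ) (hh : 0 < h) (hε : 0 < ε) (hεh : ε < h / 9) :
    PBm h ε 0 1 1 1
      = (2 * h - 3 * ε) / (h - 3 * ε) * QBm h ε 0 0 1 (-1) 0 1 1 := by
  have hd : (0 : ℝ) < h - 3 * ε := by linarith
  simp only [PBm, QBm]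
  rw [min_eq_left (by nlinarith : -(h / 6) * ((1 : ℝ) - 0) ≤ 0),
    min_eq_left (by nlinarith : (ε - h / 3) * ((1 : ℝ) - 0) ≤ 0),
    max_eq_right (by nlinarith : -(h / 6) * ((1 : ℝ) - 0) ≤ 0),
    max_eq_left (by nlinarith : (0:ℝ) ≤ (ε - h / 3) * ((-1 : ℝ) - 0)),
    max_eq_right (by nlinarith : (ε - h / 3) * ((1 : ℝ) - 0) ≤ 0)]
  rw [max_eq_right (by norm_num : (ε - h / 6) * ((0:ℝ) - 0) ≤ 0)]
  rw [div_mul_eq_mul_div, eq_div_iff hd.ne']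
  ring

/-- Lemma 1 of the paper: on the Grid-4 patch, for every affine function
`u(x,y) = a x + b y + c` the Kuzmin limiter quantities computed from the nodal values
satisfy `P_A^+ ≤ Q_A^+`, `P_A^- ≥ Q_A^-`, `P_B^+ ≤ ((2h-3ε)/(h-3ε)) Q_B^+`,
`P_B^- ≥ ((2h-3ε)/(h-3ε)) Q_B^-`, and the latter two inequalities are sharp
(equality for `u(x,y) = 1 - x/h` resp. `u(x,y) = x/h - 1`). -/
theorem kuzmin_grid4_affine_bounds
    (h ε : ℝ) (hh : 0 < h) (hε : 0 < ε) (hεh : ε < h / 9) :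
    (∀ a b c vA vB vC vD vE vF vG vH vI vJ : ℝ,
      vA = a * h + b * (2 * h) + c → vB = a * h + b * h + c →
      vC = a * (2 * h) + b * (2 * h) + c → vD = a * h + b * (3 * h) + c →
      vE = b * (3 * h) + c → vF = b * (2 * h) + c → vG = b * h + c →
      vH = a * h + c → vI = a * (2 * h) + c → vJ = a * (2 * h) + b * h + c →
      PAp h ε vA vB vC vD ≤ QAp h ε vA vB vC vD vE vF vG ∧
      QAm h ε vA vB vC vD vE vF vG ≤ PAm h ε vA vB vC vD ∧
      PBp h ε vB vC vI vJ
        ≤ (2 * h - 3 * ε) / (h - 3 * ε) * QBp h ε vA vB vC vG vH vI vJ ∧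
      (2 * h - 3 * ε) / (h - 3 * ε) * QBm h ε vA vB vC vG vH vI vJ
        ≤ PBm h ε vB vC vI vJ) ∧
    (∀ vA vB vC vG vH vI vJ : ℝ,
      vA = 1 - h / h → vB = 1 - h / h → vC = 1 - 2 * h / h → vG = 1 - 0 / h →
      vH = 1 - h / h → vI = 1 - 2 * h / h → vJ = 1 - 2 * h / h →
      PBp h ε vB vC vI vJ
        = (2 * h - 3 * ε) / (h - 3 * ε) * QBp h ε vA vB vC vG vH vI vJ) ∧
    (∀ vA vB vC vG vH vI vJ : ℝ,
      vA = h / h - 1 → vB = h / h - 1 → vC = 2 * h / h - 1 → vG = 0 / h - 1 →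
      vH = h / h - 1 → vI = 2 * h / h - 1 → vJ = 2 * h / h - 1 →
      PBm h ε vB vC vI vJ
        = (2 * h - 3 * ε) / (h - 3 * ε) * QBm h ε vA vB vC vG vH vI vJ) := by
  have hhne : h ≠ 0 := ne_of_gt hh
  refine ⟨?_, ?_, ?_⟩
  · intro a b c vA vB vC vD vE vF vG vH vI vJ hA hB hC hD hE hF hG hH hI hJ
    refine ⟨keyA h ε (a * h) (b * h) vA vB vC vD vE vF vG hh hε hεh ?_ ?_ ?_ ?_ ?_ ?_,
      keyAm h ε (a * h) (b * h) vA vB vC vD vE vF vG hh hε hεh ?_ ?_ ?_ ?_ ?_ ?_,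
      keyB h ε (a * h) (b * h) vA vB vC vG vH vI vJ hh hε hεh ?_ ?_ ?_ ?_ ?_ ?_,
      keyBm h ε (a * h) (b * h) vA vB vC vG vH vI vJ hh hε hεh ?_ ?_ ?_ ?_ ?_ ?_⟩ <;>
      · subst hA hB hC hD hE hF hG hH hI hJ; ring
  · intro vA vB vC vG vH vI vJ hA hB hC hG hH hI hJ
    have e1 : h / h = 1 := div_self hhne
    have e2 : 2 * h / h = 2 := by field_simp
    have e0 : (0 : ℝ) / h = 0 := zero_div h
    rw [e1] at hA hB hH
    rw [e2] at hC hI hJ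
    rw [e0] at hG
    norm_num at hA hB hC hG hH hI hJ
    subst hA hB hC hG hH hI hJ
    exact eqBp h ε hh hε hεh
  · intro vA vB vC vG vH vI vJ hA hB hC hG hH hI hJ
    have e1 : h / h = 1 := div_self hhne
    have e2 : 2 * h / h = 2 := by field_simp
    have e0 : (0 : ℝ) / h = 0 := zero_div h
    rw [e1] at hA hB hH
    rw [e2] at hC hI hJ
    rw [e0] at hG
    norm_num at hA hB hC hG hH hI hJ
    subst hA hB hC hG hH hI hJ
    exact eqBm h ε hh hε hεh


end
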